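/- Let A be a commutative ℚ-algebra and u₀, f₁, g̃₂ ∈ A. For the Tate I₂ form y² = x³ + u₀x² + (f₁z + O(z²))x + (g̃₂z² + O(z³)), the Weierstrass discriminant satisfies Δ = u₀²(4u₀g̃₂ - f₁²)·z² + O(z³). -/

import Mathlib

open PowerSeries

/-- Equation (4.4): for the Tate `I₂` form `y² = x³ + u₀x² + (f₁z + O(z²))x + (g̃₂z² + O(z³))`,
the Weierstrass discriminant satisfies `Δ = u₀²(4u₀g̃₂ - f₁²)z² + O(z³)`. -/
theorem tate_I2_discriminant (A : Type*) [CommRing A] [Algebra ℚ A]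
    (u₀ : A) (V W f g : PowerSeries A)
    (hV : PowerSeries.constantCoeff V = 0)
    (hW0 : PowerSeries.constantCoeff W = 0) (hW1 : (PowerSeries.coeff 1) W = 0)
    (hf : f = PowerSeries.C (algebraMap ℚ A (-1/3) * u₀ ^ 2) + V)
    (hg : g = PowerSeries.C (algebraMap ℚ A (2/27) * u₀ ^ 3)
            - PowerSeries.C (algebraMap ℚ A (1/3) * u₀) * V + W) :
    (PowerSeries.coeff 0) (4 * f ^ 3 + 27 * g ^ 2) = 0 ∧
    (PowerSeries.coeff 1) (4 * f ^ 3 + 27 * g ^ 2) = 0 ∧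
    (PowerSeries.coeff 2) (4 * f ^ 3 + 27 * g ^ 2)
        = u₀ ^ 2 * (4 * u₀ * (PowerSeries.coeff 2) W - ((PowerSeries.coeff 1) V) ^ 2) := by
  set a : A := algebraMap ℚ A (1/3) with ha
  have h3 : (3 : A) * a = 1 := by
    rw [ha, show (3:A) = algebraMap ℚ A 3 from (map_ofNat _ 3).symm, ← map_mul]
    norm_num
  have hneg : algebraMap ℚ A (-1/3) = -a := by
    rw [ha, ← map_neg]; norm_num
  have h227 : algebraMap ℚ A (2/27) = 2 * a ^ 3 := by
    rw [ha, show (2/27 : ℚ) = 2 * (1/3)^3 by norm_num, map_mul, map_pow, map_ofNat]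
  set α : PowerSeries A := PowerSeries.C a with hα
  set U : PowerSeries A := PowerSeries.C u₀ with hU
  have h3' : (3 : PowerSeries A) * α = 1 := by
    rw [hα, show (3 : PowerSeries A) = PowerSeries.C 3 from (map_ofNat _ 3).symm,
      ← map_mul, h3, map_one]
  have hfC : f = -α * U ^ 2 + V := by
    simp only [hf, hneg, map_mul, map_pow, map_neg, hα, hU]
  have hgC : g = 2 * α ^ 3 * U ^ 3 - α * U * V + W := by
    simp only [hg, h227, map_mul, map_pow, map_ofNat, hα, hU]
  -- get V = X * V', W = X^2 * W'
  obtain ⟨V', rfl⟩ : (X : PowerSeries A) ∣ V := X_dvd_iff.mpr hV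
  obtain ⟨W', rfl⟩ : (X : PowerSeries A) ^ 2 ∣ W := by
    rw [X_pow_dvd_iff]
    intro m hm
    interval_cases m
    · simpa using hW0
    · simpa using hW1
  have key : 4 * f ^ 3 + 27 * g ^ 2 =
      X ^ 2 * (-(U ^ 2) * V' ^ 2 + 4 * U ^ 3 * W'
        + X * (4 * V' ^ 3 - 18 * U * V' * W') + X ^ 2 * (27 * W' ^ 2)) := by
    rw [hfC, hgC]
    linear_combination (4 * α^3 * (9*α^2 + 3*α + 1) * U^6
      - 12 * α^2 * (3*α + 1) * U^4 * (X * V')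
      + (9*α - 1) * U^2 * (X * V')^2
      + 4 * (9*α^2 + 3*α + 1) * U^3 * (X^2 * W')
      - 18 * U * (X * V') * (X^2 * W')) * h3'
  have h0 : ∀ p : PowerSeries A, (coeff 0) (X ^ 2 * p) = 0 := by
    intro p
    rw [coeff_zero_eq_constantCoeff_apply, map_mul, map_pow, constantCoeff_X]
    ring
  have h1 : ∀ p : PowerSeries A, (coeff 1) (X ^ 2 * p) = 0 := by
    intro p
    rw [pow_two, mul_assoc]
    rw [show ((coeff 1) (X * (X * p)) : A) = (coeff 0) (X * p) from coeff_succ_X_mul 0 _,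
      coeff_zero_eq_constantCoeff_apply, map_mul, constantCoeff_X, zero_mul]
  have h2 : ∀ p : PowerSeries A, (coeff 2) (X ^ 2 * p) = constantCoeff p := by
    intro p
    rw [pow_two, mul_assoc]
    rw [show ((coeff 2) (X * (X * p)) : A) = (coeff 1) (X * p) from coeff_succ_X_mul 1 _,
      show ((coeff 1) (X * p) : A) = (coeff 0) p from coeff_succ_X_mul 0 _,
      coeff_zero_eq_constantCoeff_apply]
  have hv : (coeff 1) (X * V') = constantCoeff V' := by
    simpa using coeff_succ_X_mul 0 V'
  refine ⟨?_, ?_, ?_⟩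
  · rw [key, h0]
  · rw [key, h1]
  · rw [key, h2, h2, hv]
    simp only [map_add, map_mul, map_neg, map_pow, constantCoeff_X, constantCoeff_C, map_ofNat, hU]
    ring
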